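/- Let 0 < k < 2. The function f(u) = k·u²·(k − 2√(1 − u²)), defined for u ∈ (0, 1), has exactly one critical point in (0, 1), namely u_th(k) = √((12 − k² − k·√(12 + k²))/18); moreover 0 < u_th(k) < 1. -/

import Mathlib

open Set

/-- for `0 < k < 2`, the function
`f(u) = k u² (k - 2 √(1 - u²))` has exactly one critical point in `(0,1)`, namely
`u_th(k) = √((12 - k² - k √(12 + k²))/18)`, which lies in `(0,1)`. -/
theorem threshold_unique_critical_point (k : ℝ) (hk0 : 0 < k) (hk2 : k < 2) :
    ∀ f : ℝ → ℝ, f = (fun u => k * u ^ 2 * (k - 2 * Real.sqrt (1 - u ^ 2))) →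
    ∀ uth : ℝ, uth = Real.sqrt ((12 - k ^ 2 - k * Real.sqrt (12 + k ^ 2)) / 18) →
      uth ∈ Ioo (0 : ℝ) 1 ∧
      ∀ u ∈ Ioo (0 : ℝ) 1, (deriv f u = 0 ↔ u = uth) := by
  intro f hf uth huth
  set r := Real.sqrt (12 + k ^ 2) with hr
  have hr2 : r ^ 2 = 12 + k ^ 2 := Real.sq_sqrt (by nlinarith)
  have hrpos : 0 < r := Real.sqrt_pos.mpr (by nlinarith)
  have hrk : k < r := by nlinarith
  have hrlt : r < 6 - k := by nlinarith
  set S := (k + r) / 6 with hS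
  have hS0 : 0 < S := by rw [hS]; positivity
  have hS1 : S < 1 := by rw [hS]; linarith
  have harg : (12 - k ^ 2 - k * r) / 18 = 1 - S ^ 2 := by
    rw [hS]; linear_combination (1 / 36) * hr2
  have hargpos : 0 < (12 - k ^ 2 - k * r) / 18 := by rw [harg]; nlinarith
  have huth2 : uth ^ 2 = 1 - S ^ 2 := by
    rw [huth, Real.sq_sqrt hargpos.le, harg]
  have huthpos : 0 < uth := by rw [huth]; exact Real.sqrt_pos.mpr hargpos
  have huthlt : uth < 1 := by nlinarith
  refine ⟨⟨huthpos, huthlt⟩, ?_⟩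
  rintro u ⟨hu0, hu1⟩
  set s := Real.sqrt (1 - u ^ 2) with hsdef
  have h1u : 0 < 1 - u ^ 2 := by nlinarith
  have hspos : 0 < s := Real.sqrt_pos.mpr h1u
  have hs2 : s ^ 2 = 1 - u ^ 2 := Real.sq_sqrt h1u.le
  have hinner : HasDerivAt (fun x : ℝ => 1 - x ^ 2) (-(2 * u)) u := by
    simpa using ((hasDerivAt_pow 2 u).const_sub 1)
  have hsqrt : HasDerivAt Real.sqrt (1 / (2 * s)) (1 - u ^ 2) := by
    simpa [hsdef] using (Real.hasDerivAt_sqrt (ne_of_gt h1u))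
  have hcomp : HasDerivAt (fun x : ℝ => Real.sqrt (1 - x ^ 2)) (1 / (2 * s) * -(2 * u)) u :=
    hsqrt.comp u hinner
  have hA : HasDerivAt (fun x : ℝ => k * x ^ 2) (k * (2 * u)) u := by
    simpa [mul_comm] using (hasDerivAt_pow 2 u).const_mul k
  have hB : HasDerivAt (fun x : ℝ => k - 2 * Real.sqrt (1 - x ^ 2))
      (-(2 * (1 / (2 * s) * -(2 * u)))) u := by
    simpa using (hcomp.const_mul 2).const_sub k
  have hF : HasDerivAt f
      (k * (2 * u) * (k - 2 * s) + (k * u ^ 2) * (-(2 * (1 / (2 * s) * -(2 * u))))) u := by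
    rw [hf]; exact hA.mul hB
  have hu2 : u ^ 2 = 1 - s ^ 2 := by linarith
  have key : deriv f u * s = 2 * k * u * (k * s - 3 * s ^ 2 + 1) := by
    rw [hF.deriv]
    field_simp
    linear_combination hu2
  have hquad : k * s - 3 * s ^ 2 + 1 = 0 ↔ s = S := by
    constructor
    · intro h
      have hfac : (s - (k + r) / 6) * (s - (k - r) / 6) = 0 := by
        linear_combination (-1 / 3) * h - (1 / 36) * hr2
      rcases mul_eq_zero.mp hfac with h' | h'
      · rw [hS]; linarith
      · exfalso
        have : (k - r) / 6 < 0 := by linarith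
        linarith
    · intro h
      rw [h, hS]; linear_combination (-1 / 12) * hr2
  have hsu : s = S ↔ u = uth := by
    constructor
    · intro h
      have hsq : u ^ 2 = uth ^ 2 := by rw [huth2, hu2, h]
      have h3 : (u - uth) * (u + uth) = 0 := by linear_combination hsq
      rcases mul_eq_zero.mp h3 with h' | h'
      · linarith
      · exfalso; linarith
    · intro h
      have hsq : s ^ 2 = S ^ 2 := by
        have : u ^ 2 = uth ^ 2 := by rw [h]
        nlinarith
      have h3 : (s - S) * (s + S) = 0 := by linear_combination hsq
      rcases mul_eq_zero.mp h3 with h' | h'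
      · linarith
      · exfalso; linarith
  constructor
  · intro h
    have h0 : 2 * k * u * (k * s - 3 * s ^ 2 + 1) = 0 := by
      rw [← key, h]; ring
    have hku : 2 * k * u ≠ 0 := by positivity
    have := (mul_eq_zero.mp h0).resolve_left hku
    exact hsu.mp (hquad.mp this)
  · intro h
    have hsS : s = S := hsu.mpr h
    have hz : k * s - 3 * s ^ 2 + 1 = 0 := hquad.mpr hsS
    have h0 : deriv f u * s = 0 := by rw [key, hz]; ring
    exact (mul_eq_zero.mp h0).resolve_right (ne_of_gt hspos)
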